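/- arXiv:1309.7569 — 3 statements merged into one kernel-verified Lean document; each statement's English description precedes it below -/
import Mathlib

section
/- Define the q-difference operator (Lf)(x) = A(x)(f(qx) − f(x)) + B(x)(f(x/q) − f(x)) with A(x) = (1 − 1/(cx))(1 − 1/(dx)), B(x) = q/(c d x²), weight w(x) = 1/((cx;q)_∞(dx;q)_∞), and Casorati determinant D(f,g)(x) = (f(x)g(qx) − f(qx)g(x)) v(x) with v(x) = (1−q)/(cdx) · 1/((cqx;q)_∞ (dqx;q)_∞). Then for any functions f, g on q^ℤ·z (z ≠ 0 fixed) and any x = z q^k: ((Lf)(x) g(x) − f(x)(Lg)(x)) (1−q) x w(x) = D(f,g)(x/q) − D(f,g)(x). -/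
open scoped BigOperators

/-- q-Pochhammer infinite product `(a;q)_∞`. -/
noncomputable def qp (q a : ℂ) : ℂ := ∏' n : ℕ, (1 - a * q ^ n)

/-- q-Pochhammer `(a;q)_k`. -/
noncomputable def qpn (q a : ℂ) (k : ℕ) : ℂ := ∏ j ∈ Finset.range k, (1 - a * q ^ j)

/-- theta function `θ(x;q) = (x;q)_∞ (q/x;q)_∞`. -/
noncomputable def theta (q x : ℂ) : ℂ := qp q x * qp q (q / x)

/-- the `₁φ₁(a;b;q,z)` series. -/
noncomputable def phi11 (q a b z : ℂ) : ℂ :=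
  ∑' n : ℕ, qpn q a n / (qpn q q n * qpn q b n) * (-1) ^ n * q ^ (n * (n - 1) / 2) * z ^ n

/-- the terminating `₂φ₀(q^(-n),B;—;q,z)` series (Gasper–Rahman convention). -/
noncomputable def phi20 (q : ℂ) (n : ℕ) (B z : ℂ) : ℂ :=
  ∑ k ∈ Finset.range (n + 1),
    qpn q ((q ^ n)⁻¹) k * qpn q B k / qpn q q k * (-1) ^ k * (q ^ (k * (k - 1) / 2))⁻¹ * z ^ k

/-- coefficient `A(x)` of the q-difference operator. -/
noncomputable def Acoef (c d x : ℂ) : ℂ := (1 - 1 / (c * x)) * (1 - 1 / (d * x))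

/-- coefficient `B(x)` of the q-difference operator. -/
noncomputable def Bcoef (q c d x : ℂ) : ℂ := q / (c * d * x ^ 2)

/-- the second-order q-difference operator `L`. -/
noncomputable def Lop (q c d : ℂ) (f : ℂ → ℂ) (x : ℂ) : ℂ :=
  Acoef c d x * (f (q * x) - f x) + Bcoef q c d x * (f (x / q) - f x)

/-- the weight `w(x) = 1/((cx;q)_∞ (dx;q)_∞)`. -/
noncomputable def wgt (q c d x : ℂ) : ℂ := (qp q (c * x) * qp q (d * x))⁻¹

/-- the function `v(x)` in the Casorati determinant. -/
noncomputable def vfun (q c d x : ℂ) : ℂ :=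
  (1 - q) / (c * d * x) * (qp q (c * q * x) * qp q (d * q * x))⁻¹

/-- the Casorati determinant `D(f,g)(x)`. -/
noncomputable def Cas (q c d : ℂ) (f g : ℂ → ℂ) (x : ℂ) : ℂ :=
  (f x * g (q * x) - f (q * x) * g x) * vfun q c d x

lemma summable_log_qp (q a : ℂ) (hq : ‖q‖ < 1) :
    Summable (fun n : ℕ => Complex.log (1 - a * q ^ n)) := by
  have hg : Summable (fun n : ℕ => (3/2 : ℝ) * (‖a‖ * ‖q‖ ^ n)) :=
    ((summable_geometric_of_lt_one (norm_nonneg q) hq).mul_left ‖a‖).mul_left _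
  apply Summable.of_norm_bounded_eventually hg
  have ht : Filter.Tendsto (fun n : ℕ => ‖a * q ^ n‖) Filter.atTop (nhds 0) := by
    have := (tendsto_pow_atTop_nhds_zero_of_norm_lt_one hq).const_mul a
    rw [mul_zero] at this
    simpa using this.norm
  have hev : ∀ᶠ n : ℕ in Filter.atTop, ‖a * q ^ n‖ ≤ 1/2 :=
    ht.eventually_le_const (by norm_num)
  rw [Nat.cofinite_eq_atTop]
  filter_upwards [hev] with n hn
  have h1 : (1 : ℂ) - a * q ^ n = 1 + (-(a * q ^ n)) := by ring
  rw [h1]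
  calc ‖Complex.log (1 + (-(a * q ^ n)))‖ ≤ 3/2 * ‖-(a * q ^ n)‖ :=
        Complex.norm_log_one_add_half_le_self (by rwa [norm_neg])
    _ ≤ 3/2 * (‖a‖ * ‖q‖ ^ n) := by rw [norm_neg, norm_mul, norm_pow]

lemma qp_mult (q a : ℂ) (hq : ‖q‖ < 1) (hne : ∀ n : ℕ, (1:ℂ) - a * q ^ n ≠ 0) :
    Multipliable (fun n : ℕ => (1:ℂ) - a * q ^ n) :=
  Complex.multipliable_of_summable_log (summable_log_qp q a hq)

lemma qp_rec (q a : ℂ) (hq : ‖q‖ < 1) (hne : ∀ n : ℕ, (1:ℂ) - a * q ^ n ≠ 0) :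
    qp q a = (1 - a) * qp q (q * a) := by
  have hm : Multipliable (fun n : ℕ => (1:ℂ) - a * q * q ^ n) :=
    qp_mult q (a * q) hq (fun n => by
      simpa [pow_succ, mul_comm, mul_assoc, mul_left_comm] using hne (n + 1))
  have hshift : (fun n : ℕ => (1:ℂ) - a * q ^ (n + 1)) = (fun n : ℕ => (1:ℂ) - a * q * q ^ n) :=
    funext fun n => by ring
  have h := tprod_eq_zero_mul' (f := fun n : ℕ => (1:ℂ) - a * q ^ n) (by rw [hshift]; exact hm)
  simp only [pow_zero, mul_one] at h
  unfold qp
  rw [h]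
  congr 1
  exact tprod_congr fun n => by ring

lemma term_ne (q : ℝ) (hq0 : 0 < q) (e : ℂ) (z : ℝ)
    (hez : ∀ m : ℤ, e * (z : ℂ) ≠ (q : ℂ) ^ m) (m : ℤ) :
    (1 : ℂ) - e * (z : ℂ) * (q : ℂ) ^ m ≠ 0 := by
  intro h
  apply hez (-m)
  have h1 : e * (z : ℂ) * (q : ℂ) ^ m = 1 := by linear_combination -h
  rw [zpow_neg]
  exact eq_inv_of_mul_eq_one_left h1


/-- Lagrange-type identity: `((Lf)g - f(Lg))(1-q)x w(x) = D(f,g)(x/q) - D(f,g)(x)`. -/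
theorem lagrange_identity (q : ℝ) (hq0 : 0 < q) (hq1 : q < 1) (z : ℝ) (hz : z ≠ 0)
    (c d : ℂ) (hc : c ≠ 0) (hd : d ≠ 0)
    (hcz : ∀ k : ℤ, c * (z : ℂ) ≠ (q : ℂ) ^ k) (hdz : ∀ k : ℤ, d * (z : ℂ) ≠ (q : ℂ) ^ k)
    (f g : ℂ → ℂ) (k : ℤ) (x : ℂ) (hx : x = (z : ℂ) * (q : ℂ) ^ k) :
    (Lop (q : ℂ) c d f x * g x - f x * Lop (q : ℂ) c d g x) * (1 - (q : ℂ)) * x *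
        wgt (q : ℂ) c d x =
      Cas (q : ℂ) c d f g (x / (q : ℂ)) - Cas (q : ℂ) c d f g x := by
  have hqC : (q : ℂ) ≠ 0 := by exact_mod_cast hq0.ne'
  have hzC : (z : ℂ) ≠ 0 := by exact_mod_cast hz
  have hx0 : x ≠ 0 := by rw [hx]; exact mul_ne_zero hzC (zpow_ne_zero k hqC)
  have hqlt : ‖(q : ℂ)‖ < 1 := by
    rw [Complex.norm_real, Real.norm_eq_abs, abs_of_pos hq0]; exact hq1
  -- nonvanishing of pochhammer factors
  have key : ∀ (e : ℂ), (∀ m : ℤ, e * (z : ℂ) ≠ (q : ℂ) ^ m) → ∀ (j : ℤ) (n : ℕ),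
      (1 : ℂ) - e * ((z : ℂ) * (q : ℂ) ^ j) * (q : ℂ) ^ n ≠ 0 := by
    intro e he j n
    have e1 : e * ((z : ℂ) * (q : ℂ) ^ j) * (q : ℂ) ^ n
        = e * (z : ℂ) * (q : ℂ) ^ (j + (n : ℤ)) := by
      rw [zpow_add₀ hqC, zpow_natCast]; ring
    rw [e1]
    exact term_ne q hq0 e z he (j + n)
  have hneC : ∀ n : ℕ, (1 : ℂ) - (c * x) * (q : ℂ) ^ n ≠ 0 := by
    intro n
    have := key c hcz k n
    rw [← hx] at this
    simpa [mul_assoc] using this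
  have hneD : ∀ n : ℕ, (1 : ℂ) - (d * x) * (q : ℂ) ^ n ≠ 0 := by
    intro n
    have := key d hdz k n
    rw [← hx] at this
    simpa [mul_assoc] using this
  have hrecC : qp (q : ℂ) (c * x) = (1 - c * x) * qp (q : ℂ) (c * (q : ℂ) * x) := by
    have := qp_rec (q : ℂ) (c * x) hqlt hneC
    rwa [show (q : ℂ) * (c * x) = c * (q : ℂ) * x by ring] at this
  have hrecD : qp (q : ℂ) (d * x) = (1 - d * x) * qp (q : ℂ) (d * (q : ℂ) * x) := by
    have := qp_rec (q : ℂ) (d * x) hqlt hneD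
    rwa [show (q : ℂ) * (d * x) = d * (q : ℂ) * x by ring] at this
  have h1c : (1 : ℂ) - c * x ≠ 0 := by simpa using hneC 0
  have h1d : (1 : ℂ) - d * x ≠ 0 := by simpa using hneD 0
  have hcarg : c * (q : ℂ) * (x / (q : ℂ)) = c * x := by field_simp
  have hdarg : d * (q : ℂ) * (x / (q : ℂ)) = d * x := by field_simp
  have hA : Acoef c d x * (1 - (q : ℂ)) * x * wgt (q : ℂ) c d x = vfun (q : ℂ) c d x := by
    unfold Acoef wgt vfun
    rw [hrecC, hrecD]
    simp only [mul_inv]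
    generalize (qp (q : ℂ) (c * (q : ℂ) * x))⁻¹ = u
    generalize (qp (q : ℂ) (d * (q : ℂ) * x))⁻¹ = v
    field_simp [h1c, h1d, show (1 : ℂ) - x * d ≠ 0 by rwa [mul_comm x d]]
    ring
  have hB : Bcoef (q : ℂ) c d x * (1 - (q : ℂ)) * x * wgt (q : ℂ) c d x
      = vfun (q : ℂ) c d (x / (q : ℂ)) := by
    unfold Bcoef wgt vfun
    rw [hcarg, hdarg]
    generalize (qp (q : ℂ) (c * x) * qp (q : ℂ) (d * x))⁻¹ = t
    field_simp
  have hxq : (q : ℂ) * (x / (q : ℂ)) = x := by field_simp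
  unfold Lop Cas
  rw [hxq]
  linear_combination (f ((q : ℂ) * x) * g x - f x * g ((q : ℂ) * x)) * hA
    + (f (x / (q : ℂ)) * g x - f x * g (x / (q : ℂ))) * hB
end

section
/- Let φ(a,b) = ₂φ₁(a,b;0;q,z) = ∑_{n≥0} ((a;q)_n (b;q)_n / (q;q)_n) z^n for |z| < 1. Then the contiguous relation q·φ(a/q, b/q) + a b z² (1−a)(1−b) φ(aq, bq) = [q − z(a+b) + a b z (1 + 1/q)] φ(a,b) holds. -/
open scoped BigOperators

/-- the `₂φ₁(a,b;0;q,z)` series. -/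
noncomputable def phi210 (q a b z : ℂ) : ℂ :=
  ∑' n : ℕ, qpn q a n * qpn q b n / qpn q q n * z ^ n

lemma qpn_succ (q a : ℂ) (n : ℕ) : qpn q a (n + 1) = qpn q a n * (1 - a * q ^ n) :=
  Finset.prod_range_succ _ _

lemma qpn_div (q a : ℂ) (hq : q ≠ 0) (n : ℕ) :
    qpn q (a / q) (n + 1) = qpn q a n * (1 - a / q) := by
  rw [qpn, Finset.prod_range_succ']
  congr 1
  · refine Finset.prod_congr rfl fun j _ => ?_
    rw [pow_succ']; field_simp
  · simp

lemma qpn_mul (q a : ℂ) (n : ℕ) :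
    qpn q a (n + 1) = qpn q (a * q) n * (1 - a) := by
  rw [qpn, qpn, Finset.prod_range_succ']
  congr 1
  · refine Finset.prod_congr rfl fun j _ => ?_
    rw [pow_succ']; ring
  · simp

section Aux

variable {q : ℝ}

lemma one_sub_pow_ne (hq0 : 0 < q) (hq1 : q < 1) (k : ℕ) :
    (1 : ℂ) - (q : ℂ) * (q : ℂ) ^ k ≠ 0 := by
  have h : ((1 - q * q ^ k : ℝ) : ℂ) = 1 - (q : ℂ) * (q : ℂ) ^ k := by push_cast; ring
  rw [← h, Complex.ofReal_ne_zero]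
  have : q * q ^ k ≤ q * 1 := by
    have := pow_le_one₀ hq0.le hq1.le (n := k)
    nlinarith
  nlinarith

lemma qpn_q_ne (hq0 : 0 < q) (hq1 : q < 1) (n : ℕ) : qpn (q : ℂ) (q : ℂ) n ≠ 0 := by
  rw [qpn]
  exact Finset.prod_ne_zero_iff.2 fun j _ => one_sub_pow_ne hq0 hq1 j

lemma geom_sum_bound (hq0 : 0 < q) (hq1 : q < 1) (n : ℕ) :
    ∑ j ∈ Finset.range n, q ^ j ≤ (1 - q)⁻¹ := by
  have h := Summable.sum_le_tsum (Finset.range n) (fun i _ => pow_nonneg hq0.le i)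
    (summable_geometric_of_lt_one hq0.le hq1)
  rwa [tsum_geometric_of_lt_one hq0.le hq1] at h

lemma abs_qpn_le (hq0 : 0 < q) (hq1 : q < 1) (a : ℂ) (n : ℕ) :
    ‖qpn (q : ℂ) a n‖ ≤ Real.exp (‖a‖ * (1 - q)⁻¹) := by
  rw [qpn, norm_prod]
  calc ∏ j ∈ Finset.range n, ‖1 - a * (q : ℂ) ^ j‖
      ≤ ∏ j ∈ Finset.range n, Real.exp (‖a‖ * q ^ j) := by
        refine Finset.prod_le_prod (fun j _ => norm_nonneg _) fun j _ => ?_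
        have h1 : ‖1 - a * (q : ℂ) ^ j‖ ≤ 1 + ‖a‖ * q ^ j := by
          have := norm_sub_le (1 : ℂ) (a * (q : ℂ) ^ j)
          simpa [norm_mul, norm_pow, Complex.norm_real, Real.norm_eq_abs, abs_of_pos hq0,
            abs_of_pos (pow_pos hq0 j)] using this
        have h2 : 1 + ‖a‖ * q ^ j ≤ Real.exp (‖a‖ * q ^ j) := by
          have := Real.add_one_le_exp (‖a‖ * q ^ j)
          linarith
        linarith
    _ = Real.exp (∑ j ∈ Finset.range n, ‖a‖ * q ^ j) := (Real.exp_sum _ _).symm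
    _ ≤ Real.exp (‖a‖ * (1 - q)⁻¹) := by
        apply Real.exp_le_exp.2
        rw [← Finset.mul_sum]
        exact mul_le_mul_of_nonneg_left (geom_sum_bound hq0 hq1 n) (norm_nonneg _)

lemma abs_qpn_q_ge (hq0 : 0 < q) (hq1 : q < 1) (n : ℕ) :
    Real.exp (-(q / (1 - q) ^ 2)) ≤ ‖qpn (q : ℂ) (q : ℂ) n‖ := by
  have hq' : 0 < 1 - q := by linarith
  have habs : ‖qpn (q : ℂ) (q : ℂ) n‖ = ∏ j ∈ Finset.range n, (1 - q * q ^ j) := by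
    rw [qpn, norm_prod]
    refine Finset.prod_congr rfl fun j _ => ?_
    have h : (1 : ℂ) - (q : ℂ) * (q : ℂ) ^ j = ((1 - q * q ^ j : ℝ) : ℂ) := by push_cast; ring
    rw [h, Complex.norm_real, Real.norm_eq_abs, abs_of_pos]
    have : q * q ^ j ≤ q * 1 := by
      have := pow_le_one₀ hq0.le hq1.le (n := j); nlinarith
    nlinarith
  rw [habs]
  calc Real.exp (-(q / (1 - q) ^ 2))
      ≤ Real.exp (∑ j ∈ Finset.range n, -(q * q ^ j / (1 - q))) := by
        apply Real.exp_le_exp.2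
        have : ∑ j ∈ Finset.range n, -(q * q ^ j / (1 - q))
            = -((∑ j ∈ Finset.range n, q ^ j) * (q / (1 - q))) := by
          rw [Finset.sum_mul, ← Finset.sum_neg_distrib]
          refine Finset.sum_congr rfl fun j _ => ?_
          ring
        rw [this, neg_le_neg_iff]
        have h1 : (∑ j ∈ Finset.range n, q ^ j) * (q / (1 - q)) ≤ (1 - q)⁻¹ * (q / (1 - q)) := by
          apply mul_le_mul_of_nonneg_right (geom_sum_bound hq0 hq1 n)
          positivity
        have h2 : (1 - q)⁻¹ * (q / (1 - q)) = q / (1 - q) ^ 2 := by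
          rw [inv_mul_eq_div, div_div, ← sq]
        linarith
    _ = ∏ j ∈ Finset.range n, Real.exp (-(q * q ^ j / (1 - q))) := Real.exp_sum _ _
    _ ≤ ∏ j ∈ Finset.range n, (1 - q * q ^ j) := by
        refine Finset.prod_le_prod (fun j _ => (Real.exp_pos _).le) fun j _ => ?_
        set x := q * q ^ j with hx
        have hx0 : 0 < x := by positivity
        have hxq : x ≤ q := by
          have := pow_le_one₀ hq0.le hq1.le (n := j); nlinarith
        have hx1 : 0 < 1 - x := by linarith
        have key : Real.exp (-(x / (1 - x))) ≤ 1 - x := by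
          have h := Real.add_one_le_exp (x / (1 - x))
          have h2 : (1 - x)⁻¹ ≤ Real.exp (x / (1 - x)) := by
            have h3 : (1 - x)⁻¹ = x / (1 - x) + 1 := by field_simp; ring
            linarith
          rw [Real.exp_neg]
          exact inv_le_of_inv_le₀ hx1 h2
        have mono : Real.exp (-(x / (1 - q))) ≤ Real.exp (-(x / (1 - x))) := by
          apply Real.exp_le_exp.2
          apply neg_le_neg
          gcongr
        linarith

lemma summable_term (hq0 : 0 < q) (hq1 : q < 1) (a b z : ℂ) (hz : ‖z‖ < 1) :
    Summable (fun n => qpn (q : ℂ) a n * qpn (q : ℂ) b n / qpn (q : ℂ) (q : ℂ) n * z ^ n) := by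
  set C : ℝ := Real.exp (‖a‖ * (1 - q)⁻¹) * Real.exp (‖b‖ * (1 - q)⁻¹) /
    Real.exp (-(q / (1 - q) ^ 2)) with hC
  apply Summable.of_norm_bounded (g := fun n => C * ‖z‖ ^ n)
    ((summable_geometric_of_lt_one (norm_nonneg _) hz).mul_left C)
  intro n
  rw [norm_mul, norm_div, norm_mul, norm_pow]
  rw [hC]
  gcongr <;>
    first
      | positivity
      | exact abs_qpn_le hq0 hq1 a n
      | exact abs_qpn_le hq0 hq1 b n
      | exact abs_qpn_q_ge hq0 hq1 n

lemma key_head (hq0 : 0 < q) (hq1 : q < 1) (a b z : ℂ) :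
    (q : ℂ) * (qpn q (a / q) 1 * qpn q (b / q) 1 / qpn q q 1 * z ^ 1) =
      (q : ℂ) * (qpn q a 1 * qpn q b 1 / qpn q q 1 * z ^ 1) +
        (-(z * (a + b)) + a * b * z * (1 + 1 / (q : ℂ))) *
          (qpn q a 0 * qpn q b 0 / qpn q q 0 * z ^ 0) := by
  have hq : (q : ℂ) ≠ 0 := by exact_mod_cast hq0.ne'
  have h1 : (1 : ℂ) - (q : ℂ) * (q : ℂ) ^ 0 ≠ 0 := one_sub_pow_ne hq0 hq1 0
  simp only [qpn, Finset.prod_range_one, Finset.prod_range_zero, pow_zero, pow_one,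
    mul_one] at *
  obtain ⟨E, hE⟩ : ∃ x : ℂ, x = 1 - (q : ℂ) := ⟨_, rfl⟩
  rw [← hE] at h1 ⊢
  field_simp
  rw [hE]
  ring

set_option maxHeartbeats 1000000 in
lemma key_tail (hq0 : 0 < q) (hq1 : q < 1) (a b z : ℂ) (n : ℕ) :
    (q : ℂ) * (qpn q (a / q) (n + 2) * qpn q (b / q) (n + 2) / qpn q q (n + 2) * z ^ (n + 2)) +
        a * b * z ^ 2 * (1 - a) * (1 - b) *
          (qpn q (a * q) n * qpn q (b * q) n / qpn q q n * z ^ n) =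
      (q : ℂ) * (qpn q a (n + 2) * qpn q b (n + 2) / qpn q q (n + 2) * z ^ (n + 2)) +
        (-(z * (a + b)) + a * b * z * (1 + 1 / (q : ℂ))) *
          (qpn q a (n + 1) * qpn q b (n + 1) / qpn q q (n + 1) * z ^ (n + 1)) := by
  have hq : (q : ℂ) ≠ 0 := by exact_mod_cast hq0.ne'
  have hD : qpn (q : ℂ) (q : ℂ) n ≠ 0 := qpn_q_ne hq0 hq1 n
  have h1 : (1 : ℂ) - (q : ℂ) * (q : ℂ) ^ n ≠ 0 := one_sub_pow_ne hq0 hq1 n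
  have h2 : (1 : ℂ) - (q : ℂ) * (q : ℂ) ^ (n + 1) ≠ 0 := one_sub_pow_ne hq0 hq1 (n + 1)
  rw [qpn_div (q : ℂ) a hq (n + 1), qpn_div (q : ℂ) b hq (n + 1),
    qpn_succ (q : ℂ) a (n + 1), qpn_succ (q : ℂ) b (n + 1),
    qpn_succ (q : ℂ) (q : ℂ) (n + 1), qpn_succ (q : ℂ) (q : ℂ) n,
    qpn_mul (q : ℂ) a n, qpn_mul (q : ℂ) b n]
  obtain ⟨E1, hE1⟩ : ∃ x : ℂ, x = 1 - (q : ℂ) * (q : ℂ) ^ n := ⟨_, rfl⟩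
  obtain ⟨E2, hE2⟩ : ∃ x : ℂ, x = 1 - (q : ℂ) * (q : ℂ) ^ (n + 1) := ⟨_, rfl⟩
  obtain ⟨D, hD'⟩ : ∃ x : ℂ, x = qpn (q : ℂ) (q : ℂ) n := ⟨_, rfl⟩
  rw [← hE1] at h1 ⊢
  rw [← hE2] at h2 ⊢
  rw [← hD'] at hD ⊢
  field_simp
  rw [hE1, hE2]
  ring

end Aux

/-- contiguous relation for `₂φ₁(a,b;0;q,z)`. -/
theorem phi210_contiguous (q : ℝ) (hq0 : 0 < q) (hq1 : q < 1) (a b z : ℂ)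
    (hz : ‖z‖ < 1) :
    (q : ℂ) * phi210 (q : ℂ) (a / q) (b / q) z +
        a * b * z ^ 2 * (1 - a) * (1 - b) * phi210 (q : ℂ) (a * q) (b * q) z =
      ((q : ℂ) - z * (a + b) + a * b * z * (1 + 1 / (q : ℂ))) * phi210 (q : ℂ) a b z := by
  have hs : Summable (fun n =>
      qpn (q : ℂ) (a / q) n * qpn (q : ℂ) (b / q) n / qpn (q : ℂ) (q : ℂ) n * z ^ n) :=
    summable_term hq0 hq1 _ _ _ hz
  have hu : Summable (fun n =>
      qpn (q : ℂ) (a * q) n * qpn (q : ℂ) (b * q) n / qpn (q : ℂ) (q : ℂ) n * z ^ n) :=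
    summable_term hq0 hq1 _ _ _ hz
  have hf : Summable (fun n =>
      qpn (q : ℂ) a n * qpn (q : ℂ) b n / qpn (q : ℂ) (q : ℂ) n * z ^ n) :=
    summable_term hq0 hq1 _ _ _ hz
  simp only [phi210]
  rw [← tsum_mul_left, ← tsum_mul_left, ← tsum_mul_left]
  -- split the right-hand coefficient
  have hC : (∑' n : ℕ, ((q : ℂ) - z * (a + b) + a * b * z * (1 + 1 / (q : ℂ))) *
        (qpn (q : ℂ) a n * qpn (q : ℂ) b n / qpn (q : ℂ) (q : ℂ) n * z ^ n))
      = (∑' n : ℕ, (q : ℂ) *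
          (qpn (q : ℂ) a n * qpn (q : ℂ) b n / qpn (q : ℂ) (q : ℂ) n * z ^ n))
        + ∑' n : ℕ, (-(z * (a + b)) + a * b * z * (1 + 1 / (q : ℂ))) *
          (qpn (q : ℂ) a n * qpn (q : ℂ) b n / qpn (q : ℂ) (q : ℂ) n * z ^ n) := by
    rw [← Summable.tsum_add (hf.mul_left _) (hf.mul_left _)]
    exact tsum_congr fun n => by ring
  have hL1 : (∑' n : ℕ, (q : ℂ) *
        (qpn (q : ℂ) (a / q) n * qpn (q : ℂ) (b / q) n / qpn (q : ℂ) (q : ℂ) n * z ^ n))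
      = (q : ℂ) * (qpn (q : ℂ) (a / q) 0 * qpn (q : ℂ) (b / q) 0 / qpn (q : ℂ) (q : ℂ) 0 * z ^ 0)
        + ((q : ℂ) * (qpn (q : ℂ) (a / q) 1 * qpn (q : ℂ) (b / q) 1 / qpn (q : ℂ) (q : ℂ) 1 * z ^ 1)
          + ∑' n : ℕ, (q : ℂ) * (qpn (q : ℂ) (a / q) (n + 2) * qpn (q : ℂ) (b / q) (n + 2) /
              qpn (q : ℂ) (q : ℂ) (n + 2) * z ^ (n + 2))) := by
    rw [Summable.tsum_eq_zero_add (hs.mul_left _),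
      Summable.tsum_eq_zero_add ((summable_nat_add_iff 1).2 (hs.mul_left _))]
  have hF1 : (∑' n : ℕ, (q : ℂ) *
        (qpn (q : ℂ) a n * qpn (q : ℂ) b n / qpn (q : ℂ) (q : ℂ) n * z ^ n))
      = (q : ℂ) * (qpn (q : ℂ) a 0 * qpn (q : ℂ) b 0 / qpn (q : ℂ) (q : ℂ) 0 * z ^ 0)
        + ((q : ℂ) * (qpn (q : ℂ) a 1 * qpn (q : ℂ) b 1 / qpn (q : ℂ) (q : ℂ) 1 * z ^ 1)
          + ∑' n : ℕ, (q : ℂ) * (qpn (q : ℂ) a (n + 2) * qpn (q : ℂ) b (n + 2) /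
              qpn (q : ℂ) (q : ℂ) (n + 2) * z ^ (n + 2))) := by
    rw [Summable.tsum_eq_zero_add (hf.mul_left _),
      Summable.tsum_eq_zero_add ((summable_nat_add_iff 1).2 (hf.mul_left _))]
  have hV1 : (∑' n : ℕ, (-(z * (a + b)) + a * b * z * (1 + 1 / (q : ℂ))) *
        (qpn (q : ℂ) a n * qpn (q : ℂ) b n / qpn (q : ℂ) (q : ℂ) n * z ^ n))
      = (-(z * (a + b)) + a * b * z * (1 + 1 / (q : ℂ))) *
          (qpn (q : ℂ) a 0 * qpn (q : ℂ) b 0 / qpn (q : ℂ) (q : ℂ) 0 * z ^ 0)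
        + ∑' n : ℕ, (-(z * (a + b)) + a * b * z * (1 + 1 / (q : ℂ))) *
          (qpn (q : ℂ) a (n + 1) * qpn (q : ℂ) b (n + 1) / qpn (q : ℂ) (q : ℂ) (n + 1) *
            z ^ (n + 1)) :=
    Summable.tsum_eq_zero_add (hf.mul_left _)
  have htail : (∑' n : ℕ, (q : ℂ) * (qpn (q : ℂ) (a / q) (n + 2) * qpn (q : ℂ) (b / q) (n + 2) /
          qpn (q : ℂ) (q : ℂ) (n + 2) * z ^ (n + 2)))
        + (∑' n : ℕ, a * b * z ^ 2 * (1 - a) * (1 - b) *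
          (qpn (q : ℂ) (a * q) n * qpn (q : ℂ) (b * q) n / qpn (q : ℂ) (q : ℂ) n * z ^ n))
      = (∑' n : ℕ, (q : ℂ) * (qpn (q : ℂ) a (n + 2) * qpn (q : ℂ) b (n + 2) /
          qpn (q : ℂ) (q : ℂ) (n + 2) * z ^ (n + 2)))
        + ∑' n : ℕ, (-(z * (a + b)) + a * b * z * (1 + 1 / (q : ℂ))) *
          (qpn (q : ℂ) a (n + 1) * qpn (q : ℂ) b (n + 1) / qpn (q : ℂ) (q : ℂ) (n + 1) *
            z ^ (n + 1)) := by
    rw [← Summable.tsum_add ((summable_nat_add_iff 2).2 (hs.mul_left _)) (hu.mul_left _),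
      ← Summable.tsum_add ((summable_nat_add_iff 2).2 (hf.mul_left _))
        ((summable_nat_add_iff 1).2 (hf.mul_left _))]
    exact tsum_congr fun n => key_tail hq0 hq1 a b z n
  have hhead0 : (q : ℂ) *
        (qpn (q : ℂ) (a / q) 0 * qpn (q : ℂ) (b / q) 0 / qpn (q : ℂ) (q : ℂ) 0 * z ^ 0)
      = (q : ℂ) * (qpn (q : ℂ) a 0 * qpn (q : ℂ) b 0 / qpn (q : ℂ) (q : ℂ) 0 * z ^ 0) := by
    simp [qpn]
  have hhead1 := key_head hq0 hq1 a b z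
  rw [hL1, hC, hF1, hV1]
  linear_combination htail + hhead0 + hhead1
end

section
/- For 0 < q < 1, n ∈ ℕ, and nonzero c, d, x with dx ∉ q^(−ℕ): (c x q^(−n); q)_∞ (d x; q)_∞ ₁φ₁(q^(−n); c x q^(−n); q, cq/d) = (c/d)^n (d x q^(−n); q)_∞ (c x; q)_∞ ₁φ₁(q^(−n); d x q^(−n); q, dq/c). Equivalently, ψ_{q^{−n−1}} = (c/d)^n ψ^†_{q^{−n−1}} where ψ_γ(x) = (cqγx, dx;q)_∞ ₁φ₁(qγ; cqγx; q, cq/d) and ψ^†_γ is obtained by swapping c and d. -/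
set_option maxHeartbeats 1000000

open scoped BigOperators

/-! ### Auxiliary machinery -/

/-- triangular number `m(m-1)/2` -/
def ee (m : ℕ) : ℕ := m * (m - 1) / 2

lemma ee_succ (m : ℕ) : ee (m + 1) = ee m + m := by
  unfold ee
  rcases m with _ | k
  · rfl
  · have h : (k + 2) * (k + 1) = (k+1) * k + 2 * (k + 1) := by ring
    simp only [Nat.add_sub_cancel]
    rw [h, Nat.add_mul_div_left _ _ (by norm_num : 0 < 2)]

lemma ee_sq (m : ℕ) : ee m + ee m + m = m * m := by
  induction m with
  | zero => rfl
  | succ k ih => rw [ee_succ]; nlinarith [ih]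

/-- recursive q-binomial coefficient -/
noncomputable def qb (Q : ℂ) : ℕ → ℕ → ℂ
  | 0, 0 => 1
  | 0, _ + 1 => 0
  | _ + 1, 0 => 1
  | N + 1, j + 1 => qb Q N j + Q ^ (j + 1) * qb Q N (j + 1)

lemma qb_zero (Q : ℂ) : ∀ N j, N < j → qb Q N j = 0 := by
  intro N
  induction N with
  | zero =>
    intro j hj
    rcases j with _ | k
    · omega
    · rfl
  | succ k ih =>
    intro j hj
    rcases j with _ | j'
    · omega
    show qb Q k j' + Q ^ (j' + 1) * qb Q k (j' + 1) = 0
    rw [ih j' (by omega), ih (j'+1) (by omega)]; ring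

lemma qpn_zero (Q a : ℂ) : qpn Q a 0 = 1 := by simp [qpn]

lemma qpn_q_succ (Q : ℂ) (k : ℕ) : qpn Q Q (k+1) = qpn Q Q k * (1 - Q ^ (k+1)) := by
  unfold qpn
  rw [Finset.prod_range_succ, ← pow_succ']

lemma qq_ne (Q : ℂ) (hQ1 : ∀ k : ℕ, Q ^ (k+1) ≠ 1) (m : ℕ) : qpn Q Q m ≠ 0 := by
  unfold qpn
  apply Finset.prod_ne_zero_iff.mpr
  intro j _
  rw [← pow_succ']
  exact sub_ne_zero.mpr fun h => hQ1 j h.symm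

lemma qb_link (Q : ℂ) : ∀ N j, j ≤ N →
    qb Q N j * (qpn Q Q j * qpn Q Q (N - j)) = qpn Q Q N := by
  intro N
  induction N with
  | zero =>
    intro j hj
    have : j = 0 := by omega
    subst this
    show (1:ℂ) * _ = _
    simp [qpn]
  | succ k ih =>
    intro j hj
    rcases j with _ | j'
    · show (1:ℂ) * (qpn Q Q 0 * qpn Q Q (k+1)) = qpn Q Q (k+1)
      simp [qpn_zero]
    · show (qb Q k j' + Q ^ (j' + 1) * qb Q k (j' + 1)) * _ = _
      have hsub : k + 1 - (j' + 1) = k - j' := by omega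
      rw [hsub]
      have hp1 : qpn Q Q (j'+1) = qpn Q Q j' * (1 - Q^(j'+1)) := qpn_q_succ Q j'
      rcases Nat.lt_or_ge k (j' + 1) with hk | hk
      · have hj'k : j' = k := by omega
        subst hj'k
        rw [qb_zero Q j' (j'+1) (by omega)]
        have h0 : j' - j' = 0 := by omega
        rw [h0, qpn_zero]
        have h := ih j' (le_refl j')
        rw [h0, qpn_zero] at h
        rw [hp1]
        linear_combination (1 - Q^(j'+1)) * h
      · have h1 := ih j' (by omega)
        have h2 := ih (j' + 1) hk
        have hk1 : k - j' = (k - (j' + 1)) + 1 := by omega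
        have hQ : Q ^ (j' + 1) * Q ^ (k - j') = Q ^ (k + 1) := by
          rw [← pow_add]; congr 1; omega
        have hpk : qpn Q Q (k - j') = qpn Q Q (k - (j'+1)) * (1 - Q^(k - j')) := by
          rw [hk1, qpn_q_succ, ← hk1]
        rw [qpn_q_succ Q k, hp1, hpk]
        rw [hpk] at h1
        rw [hp1] at h2
        linear_combination (1 - Q^(j'+1)) * h1 + Q^(j'+1) * (1 - Q^(k - j')) * h2
          - qpn Q Q k * hQ

/-- `∏_{i=1}^N (1 - w q^{-i})` -/
noncomputable def prd (Q w : ℂ) (N : ℕ) : ℂ := ∏ i ∈ Finset.range N, (1 - w * (Q^(i+1))⁻¹)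

lemma qpn_inv_closed (Q : ℂ) (hQ0 : Q ≠ 0) (hQ1 : ∀ k : ℕ, Q ^ (k+1) ≠ 1) :
    ∀ m r, qpn Q ((Q^(m+r))⁻¹) m * qpn Q Q r
      = (-1)^m * Q^(ee m) * (Q^(m*(m+r)))⁻¹ * qpn Q Q (m+r) := by
  intro m
  induction m with
  | zero => intro r; simp [qpn_zero, ee]
  | succ m ih =>
    intro r
    have hidx : m + 1 + r = m + (r + 1) := by omega
    rw [hidx]
    have hstep : qpn Q ((Q^(m+(r+1)))⁻¹) (m+1)
        = qpn Q ((Q^(m+(r+1)))⁻¹) m * (1 - (Q^(m+(r+1)))⁻¹ * Q^m) :=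
      Finset.prod_range_succ _ m
    rw [hstep, ee_succ]
    have hIH := ih (r+1)
    have hqq : qpn Q Q (r+1) = qpn Q Q r * (1 - Q^(r+1)) := qpn_q_succ Q r
    have hne : (1 - Q^(r+1)) ≠ 0 := sub_ne_zero.mpr fun h => hQ1 r h.symm
    apply mul_left_cancel₀ hne
    calc (1 - Q^(r+1)) * (qpn Q ((Q^(m+(r+1)))⁻¹) m * (1 - (Q^(m+(r+1)))⁻¹ * Q^m) * qpn Q Q r)
        = (qpn Q ((Q^(m+(r+1)))⁻¹) m * qpn Q Q (r+1)) * (1 - (Q^(m+(r+1)))⁻¹ * Q^m) := by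
          rw [hqq]; ring
      _ = ((-1)^m * Q^(ee m) * (Q^(m*(m+(r+1))))⁻¹ * qpn Q Q (m+(r+1)))
            * (1 - (Q^(m+(r+1)))⁻¹ * Q^m) := by rw [hIH]
      _ = (1 - Q^(r+1)) * ((-1)^(m+1) * Q^(ee m + m) * (Q^((m+1)*(m+(r+1))))⁻¹
            * qpn Q Q (m+(r+1))) := by
          field_simp
          ring

lemma qpn_split (Q : ℂ) (hQ0 : Q ≠ 0) (w : ℂ) (m r : ℕ) :
    qpn Q (w * (Q^(m+r))⁻¹) (m+r) = qpn Q (w * (Q^(m+r))⁻¹) m * prd Q w r := by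
  unfold qpn
  rw [Finset.prod_range_add]
  congr 1
  rw [show prd Q w r = ∏ i ∈ Finset.range r, (1 - w * (Q^(i+1))⁻¹) from rfl]
  rw [← Finset.prod_range_reflect (fun i => (1 - w * (Q^(i+1))⁻¹)) r]
  apply Finset.prod_congr rfl
  intro i hi
  have hir : i < r := Finset.mem_range.mp hi
  have h1 : r - 1 - i + 1 = r - i := by omega
  rw [h1]
  congr 1
  have hpow : Q^(m+i) * Q^(r-i) = Q^(m+r) := by rw [← pow_add]; congr 1; omega
  rw [← hpow]
  have h2 : Q^(r-i) ≠ 0 := pow_ne_zero _ hQ0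
  have h3 : Q^(m+i) ≠ 0 := pow_ne_zero _ hQ0
  field_simp

lemma prd_eq_sum (Q : ℂ) (hQ0 : Q ≠ 0) (w : ℂ) : ∀ N, prd Q w N
    = ∑ j ∈ Finset.range (N+1), qb Q N j * (-w)^j * Q^(ee j) * (Q^(j*N))⁻¹ := by
  intro N
  induction N with
  | zero => simp [prd, qb, ee]
  | succ N ih =>
    have hstep : prd Q w (N+1) = prd Q w N * (1 - w * (Q^(N+1))⁻¹) :=
      Finset.prod_range_succ _ N
    rw [hstep, ih]
    rw [Finset.sum_range_succ' (fun j => qb Q (N+1) j * (-w)^j * Q^(ee j) * (Q^(j*(N+1)))⁻¹) (N+1)]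
    have key : ∀ j, qb Q (N+1) (j+1) * (-w)^(j+1) * Q^(ee (j+1)) * (Q^((j+1)*(N+1)))⁻¹
        = (qb Q N j * (-w)^j * Q^(ee j) * (Q^(j*N))⁻¹) * ((-w) * (Q^(N+1))⁻¹)
          + qb Q N (j+1) * (-w)^(j+1) * Q^(ee (j+1)) * (Q^((j+1)*N))⁻¹ := by
      intro j
      show (qb Q N j + Q^(j+1) * qb Q N (j+1)) * _ * _ * _ = _
      rw [ee_succ]
      have e1 : Q^((j+1)*(N+1)) = Q^(j*N) * Q^(N+1) * Q^j := by
        rw [← pow_add, ← pow_add]; congr 1; ring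
      field_simp
      ring
    rw [Finset.sum_congr rfl (fun j _ => key j)]
    rw [Finset.sum_add_distrib]
    have h2 : ∑ j ∈ Finset.range (N+1), qb Q N (j+1) * (-w)^(j+1) * Q^(ee (j+1)) * (Q^((j+1)*N))⁻¹
        = (∑ j ∈ Finset.range (N+1), qb Q N j * (-w)^j * Q^(ee j) * (Q^(j*N))⁻¹)
          - qb Q N 0 * (-w)^0 * Q^(ee 0) * (Q^(0*N))⁻¹ := by
      rw [eq_sub_iff_add_eq, ← Finset.sum_range_succ'
        (fun j => qb Q N j * (-w)^j * Q^(ee j) * (Q^(j*N))⁻¹) (N+1)]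
      rw [Finset.sum_range_succ]
      rw [qb_zero Q N (N+1) (by omega)]
      ring
    rw [h2, ← Finset.sum_mul]
    have h0 : qb Q (N+1) 0 * (-w)^0 * Q^(ee 0) * (Q^(0*(N+1)))⁻¹ = 1 := by
      show (1:ℂ) * _ * _ * _ = 1
      simp [ee]
    have h0' : qb Q N 0 * (-w)^0 * Q^(ee 0) * (Q^(0*N))⁻¹ = 1 := by
      rcases N with _ | N' <;> · show (1:ℂ) * _ * _ * _ = 1; simp [ee]
    rw [h0, h0']
    ring

lemma phi11_term (Q : ℂ) (hQ0 : Q ≠ 0) (n : ℕ) (b z : ℂ) :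
    phi11 Q ((Q^n)⁻¹) b z = ∑ m ∈ Finset.range (n+1),
      qpn Q ((Q^n)⁻¹) m / (qpn Q Q m * qpn Q b m) * (-1)^m * Q^(m*(m-1)/2) * z^m := by
  unfold phi11
  apply tsum_eq_sum
  intro m hm
  have hnm : n + 1 ≤ m := by
    by_contra h
    exact hm (Finset.mem_range.mpr (by omega))
  have hz : qpn Q ((Q^n)⁻¹) m = 0 := by
    apply Finset.prod_eq_zero (Finset.mem_range.mpr (by omega : n < m))
    rw [inv_mul_cancel₀ (pow_ne_zero n hQ0)]
    ring
  rw [hz]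
  simp

lemma mult_aux (Q : ℂ) (hQlt : ‖Q‖ < 1) (a : ℂ) (ha : ∀ j : ℕ, 1 - a * Q^j ≠ 0) :
    Multipliable (fun j : ℕ => 1 - a * Q^j) := by
  apply Complex.multipliable_of_summable_log
  have h0 : (0:ℝ) ≤ ‖Q‖ := norm_nonneg Q
  have htend : Filter.Tendsto (fun k : ℕ => ‖a‖ * ‖Q‖^k) Filter.atTop (nhds 0) := by
    simpa using (tendsto_pow_atTop_nhds_zero_of_lt_one h0 hQlt).const_mul ‖a‖
  obtain ⟨k, hk⟩ := (htend.eventually_le_const (by norm_num : (0:ℝ) < 1/2)).exists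
  rw [← summable_nat_add_iff k]
  apply Summable.of_norm_bounded (g := fun j => 2 * (‖a‖ * ‖Q‖^k) * ‖Q‖^j)
    ((summable_geometric_of_lt_one h0 hQlt).mul_left _)
  intro j
  have hnz : ‖-(a * Q^(j+k))‖ = ‖a‖ * ‖Q‖^k * ‖Q‖^j := by
    rw [norm_neg, norm_mul, norm_pow, pow_add]; ring
  have hle1 : ‖Q‖^j ≤ 1 := pow_le_one₀ h0 (le_of_lt hQlt)
  have hzle : ‖-(a * Q^(j+k))‖ ≤ 1/2 := by
    rw [hnz]
    calc ‖a‖ * ‖Q‖^k * ‖Q‖^j ≤ (1/2) * 1 := by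
          apply mul_le_mul hk hle1 (by positivity) (by norm_num)
      _ = 1/2 := by norm_num
  show ‖Complex.log (1 - a * Q^(j+k))‖ ≤ _
  have heq : (1 : ℂ) - a * Q^(j+k) = 1 + -(a * Q^(j+k)) := by ring
  rw [heq]
  have hlog := Complex.norm_log_one_add_le (lt_of_le_of_lt hzle (by norm_num))
  set z := -(a * Q^(j+k)) with hzdef
  have : ‖z‖^2 * (1 - ‖z‖)⁻¹ / 2 + ‖z‖ ≤ 2 * (‖a‖ * ‖Q‖^k) * ‖Q‖^j := by
    have hinv : (1 - ‖z‖)⁻¹ ≤ 2 := by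
      rw [inv_le_comm₀ (by linarith [norm_nonneg z, hzle] : (0:ℝ) < 1 - ‖z‖) (by norm_num)]
      linarith
    have h2 : ‖z‖^2 * (1 - ‖z‖)⁻¹ / 2 ≤ ‖z‖ := by
      have : ‖z‖^2 * (1 - ‖z‖)⁻¹ ≤ ‖z‖ * 2 := by
        calc ‖z‖^2 * (1 - ‖z‖)⁻¹ ≤ ‖z‖^2 * 2 := by
              apply mul_le_mul_of_nonneg_left hinv (by positivity)
          _ ≤ ‖z‖ * 2 := by nlinarith [norm_nonneg z, hzle]
      linarith
    have h3 : ‖z‖ = ‖a‖ * ‖Q‖^k * ‖Q‖^j := hnz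
    linarith [h3.le, h3.ge]
  exact le_trans hlog this

lemma qp_split (Q : ℂ) (hQ0 : Q ≠ 0) (hQlt : ‖Q‖ < 1) (w : ℂ) (n : ℕ)
    (hw : ∀ j : ℕ, 1 - w * Q^j ≠ 0) :
    qp Q (w * (Q^n)⁻¹) = qpn Q (w * (Q^n)⁻¹) n * qp Q w := by
  have hmul : Multipliable (fun i : ℕ => 1 - (w * (Q^n)⁻¹) * Q^(i+n)) := by
    apply (mult_aux Q hQlt w hw).congr
    intro i
    congr 1
    rw [pow_add]
    field_simp
  have key := Multipliable.prod_mul_tprod_nat_mul' (M := ℂ)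
    (f := fun i => 1 - (w * (Q^n)⁻¹) * Q^i) (k := n) hmul
  unfold qp qpn
  rw [← key]
  congr 1
  apply tprod_congr
  intro i
  show 1 - w * (Q^n)⁻¹ * Q^(i+n) = 1 - w * Q^i
  rw [pow_add]
  field_simp

lemma sub_helper (a b c2 d : ℕ) (h : a = b + c2 + d) : a - b - c2 = d := by omega

/-- canonical double-sum term -/
noncomputable def FF (Q w y : ℂ) (n m j : ℕ) : ℂ :=
  (qpn Q Q n / (qpn Q Q m * (qpn Q Q j * qpn Q Q (n-m-j)))) *
    ((-1:ℂ)^m * (-1)^m) * (Q^(ee m) * Q^(ee m) * Q^m) *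
    Q^(n*n - m*n - j*(n-m)) * Q^(ee j) * y^m * (-w)^j

lemma expandL (Q : ℂ) (hQ0 : Q ≠ 0) (hQ1 : ∀ k : ℕ, Q ^ (k+1) ≠ 1) (n : ℕ) (w y : ℂ)
    (hw : ∀ m : ℕ, qpn Q (w * (Q^n)⁻¹) m ≠ 0) :
    Q^(n*n) * (qpn Q (w * (Q^n)⁻¹) n * ∑ m ∈ Finset.range (n+1),
        qpn Q ((Q^n)⁻¹) m / (qpn Q Q m * qpn Q (w * (Q^n)⁻¹) m) * (-1)^m
          * Q^(m*(m-1)/2) * (y*Q)^m)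
    = ∑ m ∈ Finset.range (n+1), ∑ j ∈ Finset.range (n-m+1), FF Q w y n m j := by
  simp only [Finset.mul_sum]
  apply Finset.sum_congr rfl
  intro m hm
  have hmn : m ≤ n := by have := Finset.mem_range.mp hm; omega
  obtain ⟨r, hr⟩ : ∃ r, n = m + r := ⟨n - m, by omega⟩
  subst hr
  have hqqr := qq_ne Q hQ1 r
  have hqqm := qq_ne Q hQ1 m
  have hqpnw := hw m
  rw [show m + r - m = r from by omega]
  rw [show m*(m-1)/2 = ee m from rfl]
  rw [qpn_split Q hQ0 w m r]
  rw [(eq_div_iff hqqr).mpr (qpn_inv_closed Q hQ0 hQ1 m r)]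
  rw [show (m+r)*(m+r) = m*(m+r) + (r*m + r*r) from by ring, pow_add]
  trans ((Q^(m*(m+r)) * (Q^(m*(m+r)))⁻¹) *
    (qpn Q (w * (Q^(m+r))⁻¹) m * (qpn Q (w * (Q^(m+r))⁻¹) m)⁻¹) *
    (Q^(r*m + r*r) * prd Q w r * (((-1:ℂ)^m * (-1)^m) * (Q^(ee m) * Q^(ee m) * Q^m) * y^m *
      (qpn Q Q (m+r) / (qpn Q Q m * qpn Q Q r)))))
  · ring
  rw [mul_inv_cancel₀ (pow_ne_zero _ hQ0), mul_inv_cancel₀ hqpnw, one_mul, one_mul]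
  rw [prd_eq_sum Q hQ0 w r]
  simp only [Finset.mul_sum, Finset.sum_mul]
  apply Finset.sum_congr rfl
  intro j hj
  have hjr : j ≤ r := by have := Finset.mem_range.mp hj; omega
  obtain ⟨k, hk⟩ : ∃ k, r = j + k := ⟨r - j, by omega⟩
  subst hk
  have hqqj := qq_ne Q hQ1 j
  have hqqk := qq_ne Q hQ1 k
  have h2 : qb Q (j+k) j = qpn Q Q (j+k) / (qpn Q Q j * qpn Q Q k) := by
    have := qb_link Q (j+k) j (by omega)
    rw [show (j+k) - j = k from by omega] at this
    exact (eq_div_iff (mul_ne_zero hqqj hqqk)).mpr this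
  rw [h2]
  rw [show (j+k)*m + (j+k)*(j+k) = j*(j+k) + ((j+k)*m + k*(j+k)) from by ring, pow_add]
  trans ((Q^(j*(j+k)) * (Q^(j*(j+k)))⁻¹) * (Q^((j+k)*m + k*(j+k)) * ((-w)^j * Q^(ee j)) *
    (qpn Q Q (j+k) / (qpn Q Q j * qpn Q Q k)) *
    (((-1:ℂ)^m * (-1)^m) * (Q^(ee m) * Q^(ee m) * Q^m) * y^m *
      (qpn Q Q (m+(j+k)) / (qpn Q Q m * qpn Q Q (j+k))))))
  · ring
  rw [mul_inv_cancel₀ (pow_ne_zero _ hQ0), one_mul]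
  unfold FF
  rw [show m + (j+k) - m - j = k from by omega, show m + (j+k) - m = j + k from by omega]
  have hE : (m+(j+k))*(m+(j+k)) - m*(m+(j+k)) - j*(j+k) = (j+k)*(m+k) :=
    sub_helper _ _ _ _ (by ring)
  rw [hE]
  have hqqjk := qq_ne Q hQ1 (j+k)
  have hqqmjk := qq_ne Q hQ1 (m+(j+k))
  field_simp
  ring

lemma matchLR (Q c d x : ℂ) (hQ0 : Q ≠ 0) (hQ1 : ∀ k : ℕ, Q ^ (k+1) ≠ 1)
    (hc : c ≠ 0) (hd : d ≠ 0) (n : ℕ) :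
    ∑ m ∈ Finset.range (n+1), ∑ j ∈ Finset.range (n-m+1), FF Q (c*x) (c/d) n m j
    = (c/d)^n * ∑ m ∈ Finset.range (n+1), ∑ j ∈ Finset.range (n-m+1), FF Q (d*x) (d/c) n m j := by
  rw [Finset.mul_sum]
  simp only [Finset.mul_sum]
  rw [Finset.sum_sigma' (Finset.range (n+1)) (fun m => Finset.range (n-m+1))
    (fun m j => FF Q (c*x) (c/d) n m j)]
  rw [Finset.sum_sigma' (Finset.range (n+1)) (fun m => Finset.range (n-m+1))
    (fun m j => (c/d)^n * FF Q (d*x) (d/c) n m j)]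
  apply Finset.sum_nbij' (i := fun p => (⟨n - p.1 - p.2, p.2⟩ : Σ _ : ℕ, ℕ))
    (j := fun p => (⟨n - p.1 - p.2, p.2⟩ : Σ _ : ℕ, ℕ))
  · intro p hp
    simp only [Finset.mem_sigma, Finset.mem_range] at *
    omega
  · intro p hp
    simp only [Finset.mem_sigma, Finset.mem_range] at *
    omega
  · intro p hp
    simp only [Finset.mem_sigma, Finset.mem_range] at hp
    obtain ⟨m, j⟩ := p
    simp only at *
    congr 1 <;> omega
  · intro p hp
    simp only [Finset.mem_sigma, Finset.mem_range] at hp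
    obtain ⟨m, j⟩ := p
    simp only at *
    congr 1 <;> omega
  · intro p hp
    simp only [Finset.mem_sigma, Finset.mem_range] at hp
    obtain ⟨m, j⟩ := p
    simp only at *
    obtain ⟨r, hn⟩ : ∃ r, n = m + j + r := ⟨n - m - j, by omega⟩
    subst hn
    rw [show m + j + r - m - j = r from by omega]
    unfold FF
    rw [show m + j + r - r - j = m from by omega, show m + j + r - r = j + m from by omega,
      show m + j + r - m - j = r from by omega, show m + j + r - m = j + r from by omega]
    have hE1 : (m+j+r)*(m+j+r) - m*(m+j+r) - j*(j+r) = (j+r)*(m+r) :=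
      sub_helper _ _ _ _ (by ring)
    have hE2 : (m+j+r)*(m+j+r) - r*(m+j+r) - j*(j+m) = (j+m)*(r+m) :=
      sub_helper _ _ _ _ (by ring)
    rw [hE1, hE2]
    have hsqm : Q^(ee m) * Q^(ee m) * Q^m = Q^(m*m) := by
      rw [← pow_add, ← pow_add, ee_sq]
    have hsqr : Q^(ee r) * Q^(ee r) * Q^r = Q^(r*r) := by
      rw [← pow_add, ← pow_add, ee_sq]
    have hnegm : ((-1:ℂ)^m * (-1)^m) = 1 := by
      rw [← pow_add]; exact Even.neg_one_pow ⟨m, rfl⟩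
    have hnegr : ((-1:ℂ)^r * (-1)^r) = 1 := by
      rw [← pow_add]; exact Even.neg_one_pow ⟨r, rfl⟩
    rw [hsqm, hsqr, hnegm, hnegr]
    have hcomb : (c/d)^(m+j+r) * ((d/c)^r * (-(d*x))^j) = (c/d)^m * (-(c*x))^j := by
      have e1 : (c/d)*(d/c) = 1 := by field_simp
      have e2 : (c/d) * (-(d*x)) = -(c*x) := by field_simp; try ring
      calc (c/d)^(m+j+r) * ((d/c)^r * (-(d*x))^j)
          = ((c/d)*(d/c))^r * (((c/d)*(-(d*x)))^j * (c/d)^m) := by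
            rw [mul_pow, mul_pow]; ring
        _ = (c/d)^m * (-(c*x))^j := by rw [e1, e2]; ring
    linear_combination (-(qpn Q Q (m+j+r) / (qpn Q Q r * (qpn Q Q j * qpn Q Q m)) * 1 *
      (Q^(r*r)) * Q^((j+m)*(r+m)) * Q^(ee j))) * hcomb

/-- `ψ_{q^{-n-1}} = (c/d)^n ψ^†_{q^{-n-1}}` for the eigenfunctions `ψ_γ`. -/
theorem psi_degenerate (q : ℝ) (hq0 : 0 < q) (hq1 : q < 1) (n : ℕ) (c d x : ℂ)
    (hc : c ≠ 0) (hd : d ≠ 0) (hx : x ≠ 0)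
    (hcx : ∀ k : ℤ, c * x ≠ (q : ℂ) ^ k) (hdx : ∀ k : ℤ, d * x ≠ (q : ℂ) ^ k) :
    qp (q : ℂ) (c * x * (((q : ℂ) ^ n)⁻¹)) * qp (q : ℂ) (d * x) *
        phi11 (q : ℂ) (((q : ℂ) ^ n)⁻¹) (c * x * (((q : ℂ) ^ n)⁻¹)) (c * (q : ℂ) / d) =
      (c / d) ^ n * (qp (q : ℂ) (d * x * (((q : ℂ) ^ n)⁻¹)) * qp (q : ℂ) (c * x) *
        phi11 (q : ℂ) (((q : ℂ) ^ n)⁻¹) (d * x * (((q : ℂ) ^ n)⁻¹)) (d * (q : ℂ) / c)) := by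
  have hQ0 : (q:ℂ) ≠ 0 := by
    simp only [ne_eq, Complex.ofReal_eq_zero]
    exact hq0.ne'
  have hQ1 : ∀ k : ℕ, ((q:ℂ))^(k+1) ≠ 1 := by
    intro k h
    have h' : ((q^(k+1) : ℝ) : ℂ) = ((1:ℝ) : ℂ) := by push_cast; rw [h]
    have h'' : q^(k+1) = 1 := Complex.ofReal_injective h'
    have hlt : q^(k+1) < 1 := pow_lt_one₀ hq0.le hq1 (by omega)
    linarith
  have hQlt : ‖(q:ℂ)‖ < 1 := by
    rw [Complex.norm_real, Real.norm_eq_abs, abs_of_pos hq0]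
    exact hq1
  -- nonvanishing of factors 1 - w q^j
  have hfac : ∀ (w : ℂ), (∀ k : ℤ, w ≠ (q:ℂ)^k) → ∀ j : ℕ, 1 - w * (q:ℂ)^j ≠ 0 := by
    intro w hw j h
    apply hw (-(j:ℤ))
    have h' : w * (q:ℂ)^j = 1 := by linear_combination -h
    rw [zpow_neg, zpow_natCast]
    field_simp
    linear_combination h'
  -- nonvanishing of the finite shifted products
  have hqpnw : ∀ (w : ℂ), (∀ k : ℤ, w ≠ (q:ℂ)^k) →
      ∀ m : ℕ, qpn (q:ℂ) (w * ((q:ℂ)^n)⁻¹) m ≠ 0 := by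
    intro w hw m
    unfold qpn
    apply Finset.prod_ne_zero_iff.mpr
    intro j _
    intro h
    apply hw ((n:ℤ) - (j:ℤ))
    have h' : w * ((q:ℂ)^n)⁻¹ * (q:ℂ)^j = 1 := by linear_combination -h
    rw [zpow_sub₀ hQ0, zpow_natCast, zpow_natCast]
    have hqj : ((q:ℂ))^j ≠ 0 := pow_ne_zero _ hQ0
    have hqn : ((q:ℂ))^n ≠ 0 := pow_ne_zero _ hQ0
    field_simp
    field_simp at h'
    linear_combination h'
  rw [show c * (q:ℂ) / d = c/d * (q:ℂ) from by ring,
    show d * (q:ℂ) / c = d/c * (q:ℂ) from by ring]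
  rw [phi11_term (q:ℂ) hQ0 n (c * x * (((q:ℂ)^n)⁻¹)) (c/d * (q:ℂ)),
    phi11_term (q:ℂ) hQ0 n (d * x * (((q:ℂ)^n)⁻¹)) (d/c * (q:ℂ))]
  rw [qp_split (q:ℂ) hQ0 hQlt (c*x) n (hfac (c*x) hcx),
    qp_split (q:ℂ) hQ0 hQlt (d*x) n (hfac (d*x) hdx)]
  have E1 := expandL (q:ℂ) hQ0 hQ1 n (c*x) (c/d) (hqpnw (c*x) hcx)
  have E2 := expandL (q:ℂ) hQ0 hQ1 n (d*x) (d/c) (hqpnw (d*x) hdx)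
  have M := matchLR (q:ℂ) c d x hQ0 hQ1 hc hd n
  have KEY0 := E1.trans (M.trans (by rw [← E2]))
  apply mul_left_cancel₀ (pow_ne_zero (n*n) hQ0)
  linear_combination (qp (q:ℂ) (c*x) * qp (q:ℂ) (d*x)) * KEY0
end
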